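/- Let n ≤ m, let X ∈ ℝ^{n×m} be the matrix whose i-th row is x̃_iᵀ for vectors x̃_1, …, x̃_n ∈ ℝ^m, and suppose X has rank n. Then for arbitrary labels y_1, …, y_n ∈ {−1,+1}, the maximum ℓ2-margin satisfies max_{‖v‖₂ ≤ 1} min_{i∈[n]} y_i x̃_iᵀ v ≥ s_min,nonzero(X)/√n, where s_min,nonzero(X) denotes the smallest nonzero singular value of X. -/

import Mathlib

open MeasureTheory Real Set
open scoped BigOperators

noncomputable section

/-- Euclidean dot product on `Fin d → ℝ`. -/
def dot {d : ℕ} (u v : Fin d → ℝ) : ℝ := ∑ j, u j * v j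

/-- Euclidean (`ℓ2`) norm on `Fin d → ℝ`. -/
def norm2 {d : ℕ} (u : Fin d → ℝ) : ℝ := Real.sqrt (∑ j, (u j) ^ 2)

lemma norm2_nonneg {d : ℕ} (u : Fin d → ℝ) : 0 ≤ norm2 u := Real.sqrt_nonneg _

lemma norm2_sq {d : ℕ} (u : Fin d → ℝ) : norm2 u ^ 2 = ∑ j, (u j) ^ 2 :=
  Real.sq_sqrt (Finset.sum_nonneg fun j _ => sq_nonneg _)

lemma norm2_smul {d : ℕ} (c : ℝ) (hc : 0 ≤ c) (u : Fin d → ℝ) :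
    norm2 (fun j => c * u j) = c * norm2 u := by
  unfold norm2
  rw [show (∑ j, (c * u j) ^ 2) = c ^ 2 * ∑ j, (u j) ^ 2 by
      rw [Finset.mul_sum]; exact Finset.sum_congr rfl fun j _ => by ring,
    Real.sqrt_mul (sq_nonneg c), Real.sqrt_sq hc]

lemma abs_dot_le {d : ℕ} (u v : Fin d → ℝ) : |dot u v| ≤ norm2 u * norm2 v := by
  have h := Finset.sum_mul_sq_le_sq_mul_sq Finset.univ u v
  have := Real.sqrt_le_sqrt h
  rwa [Real.sqrt_sq_eq_abs, Real.sqrt_mul (Finset.sum_nonneg fun j _ => sq_nonneg _)] at this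

/-- Let `n ≤ m` and let `X` be the matrix with rows `x̃_iᵀ`, of full row
rank `n`. Then for arbitrary labels `y_i ∈ {±1}`, the maximum `ℓ2`-margin is at least
`s_min,nonzero(X)/√n`. Since `X` has rank `n`, the smallest nonzero singular value of `X`
is `min_{‖u‖₂ = 1} ‖Xᵀu‖₂`, formalized here as an infimum over unit vectors `u ∈ ℝⁿ`. -/
theorem max_margin_ge_smin_div_sqrt
    {n m : ℕ} (hn : 0 < n) (hnm : n ≤ m) (xt : Fin n → Fin m → ℝ)
    (hrank : (Matrix.of fun i j => xt i j).rank = n)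
    (y : Fin n → ℝ) (hy : ∀ i, y i = 1 ∨ y i = -1) :
    sInf {c | ∃ u : Fin n → ℝ, norm2 u = 1 ∧
        c = norm2 (fun j : Fin m => ∑ i, u i * xt i j)} / Real.sqrt n
      ≤ sSup {c | ∃ v : Fin m → ℝ, norm2 v ≤ 1 ∧ c = ⨅ i, y i * dot (xt i) v} := by
  haveI : Nonempty (Fin n) := ⟨⟨0, hn⟩⟩
  set A : Matrix (Fin n) (Fin m) ℝ := Matrix.of fun i j => xt i j with hA
  -- A * A.transpose is surjective as a linear map, so there is α with (A*Aᵀ) α = y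
  have hB : (A * A.transpose).rank = n := by rw [Matrix.rank_self_mul_transpose, hrank]
  have hsurj : LinearMap.range (A * A.transpose).mulVecLin = ⊤ := by
    apply Submodule.eq_top_of_finrank_eq
    rw [← Matrix.rank]; rw [hB]; simp [Module.finrank_pi]
  obtain ⟨α, hα⟩ : ∃ α, (A * A.transpose).mulVec α = y := by
    have := LinearMap.range_eq_top.mp hsurj
    exact this y
  set w : Fin m → ℝ := fun j => ∑ i, α i * xt i j with hw
  -- X w = y
  have hyw : ∀ i, dot (xt i) w = y i := by
    intro i
    calc dot (xt i) w = ∑ j, ∑ k, xt i j * (α k * xt k j) := by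
          simp only [dot, hw, Finset.mul_sum]
      _ = ∑ k, ∑ j, xt i j * (α k * xt k j) := Finset.sum_comm
      _ = ∑ k, (∑ j, xt i j * xt k j) * α k := by
          refine Finset.sum_congr rfl fun k _ => ?_
          rw [Finset.sum_mul]
          exact Finset.sum_congr rfl fun j _ => by ring
      _ = (A * A.transpose).mulVec α i := by
          simp [Matrix.mulVec, Matrix.mul_apply, dotProduct, Matrix.transpose_apply,
            hA, Finset.sum_mul]
      _ = y i := congrFun hα i
  have hy2 : ∀ i, y i ^ 2 = 1 := by intro i; rcases hy i with h | h <;> rw [h] <;> norm_num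
  have hyn : ∀ i, y i ≠ 0 := by intro i; rcases hy i with h | h <;> rw [h] <;> norm_num
  set a := norm2 α with ha
  set s := norm2 w with hs
  -- s > 0
  have hwne : ∃ j, w j ≠ 0 := by
    by_contra h
    push_neg at h
    have : dot (xt ⟨0, hn⟩) w = 0 := by
      simp only [dot]; exact Finset.sum_eq_zero fun j _ => by rw [h j, mul_zero]
    exact hyn ⟨0, hn⟩ (by rw [← hyw ⟨0, hn⟩, this])
  have hsumw : 0 < ∑ j, (w j) ^ 2 := by
    obtain ⟨j, hj⟩ := hwne
    exact Finset.sum_pos' (fun k _ => sq_nonneg _) ⟨j, Finset.mem_univ j, by positivity⟩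
  have hspos : 0 < s := Real.sqrt_pos.mpr hsumw
  -- a > 0
  have hapos : 0 < a := by
    rcases eq_or_lt_of_le (norm2_nonneg α) with h | h
    · exfalso
      have h2 : ∑ i, (α i) ^ 2 = 0 := by
        rw [← norm2_sq α, ← h]; norm_num
      have hα0 : ∀ i, α i = 0 := by
        intro i
        have := (Finset.sum_eq_zero_iff_of_nonneg (fun i _ => sq_nonneg (α i))).mp h2 i
          (Finset.mem_univ i)
        exact pow_eq_zero_iff (by norm_num) |>.mp this
      obtain ⟨j, hj⟩ := hwne
      exact hj (Finset.sum_eq_zero fun i _ => by rw [hα0 i, zero_mul])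
    · exact h
  -- s² = ∑ α y ≤ a √n
  have hs2 : s ^ 2 = ∑ i, α i * y i := by
    rw [hs, norm2_sq]
    have hsq' : ∀ j, (w j) ^ 2 = ∑ i, α i * (xt i j * w j) := by
      intro j
      have hwj : w j = ∑ i, α i * xt i j := rfl
      calc (w j) ^ 2 = (∑ i, α i * xt i j) * w j := by rw [← hwj, sq]
        _ = ∑ i, (α i * xt i j) * w j := Finset.sum_mul _ _ _
        _ = ∑ i, α i * (xt i j * w j) := Finset.sum_congr rfl fun i _ => by ring
    rw [Finset.sum_congr rfl fun j _ => hsq' j, Finset.sum_comm]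
    refine Finset.sum_congr rfl fun i _ => ?_
    rw [← Finset.mul_sum]
    congr 1
    exact hyw i
  have hny : norm2 y = Real.sqrt n := by
    unfold norm2
    congr 1
    rw [Finset.sum_congr rfl fun i _ => hy2 i]
    simp
  have hcs : s ^ 2 ≤ a * Real.sqrt n := by
    rw [hs2]
    calc ∑ i, α i * y i ≤ |dot α y| := le_abs_self _
      _ ≤ norm2 α * norm2 y := abs_dot_le α y
      _ = a * Real.sqrt n := by rw [← ha, hny]
  have hsqn : (0 : ℝ) < Real.sqrt n := Real.sqrt_pos.mpr (by exact_mod_cast hn)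
  -- sInf bound: u = α / a
  have hinf : sInf {c | ∃ u : Fin n → ℝ, norm2 u = 1 ∧
      c = norm2 (fun j : Fin m => ∑ i, u i * xt i j)} ≤ a⁻¹ * s := by
    apply csInf_le
    · exact ⟨0, fun c hc => by obtain ⟨u, _, rfl⟩ := hc; exact norm2_nonneg _⟩
    · refine ⟨fun i => a⁻¹ * α i, ?_, ?_⟩
      · rw [norm2_smul a⁻¹ (by positivity) α, ← ha, inv_mul_cancel₀ hapos.ne']
      · have : (fun j : Fin m => ∑ i, (a⁻¹ * α i) * xt i j) = fun j => a⁻¹ * w j := by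
          ext j; rw [hw, Finset.mul_sum]; exact Finset.sum_congr rfl fun i _ => by ring
        rw [this, norm2_smul a⁻¹ (by positivity) w, ← hs]
  -- sSup bound: v = w / s
  have hsup : s⁻¹ ≤ sSup {c | ∃ v : Fin m → ℝ, norm2 v ≤ 1 ∧ c = ⨅ i, y i * dot (xt i) v} := by
    apply le_csSup
    · -- bounded above
      refine ⟨norm2 (xt ⟨0, hn⟩), fun c hc => ?_⟩
      obtain ⟨v, hv, rfl⟩ := hc
      have hbdd : BddBelow (Set.range fun i => y i * dot (xt i) v) :=
        (Set.finite_range _).bddBelow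
      calc ⨅ i, y i * dot (xt i) v ≤ y ⟨0, hn⟩ * dot (xt ⟨0, hn⟩) v := ciInf_le hbdd _
        _ ≤ |y ⟨0, hn⟩ * dot (xt ⟨0, hn⟩) v| := le_abs_self _
        _ = |dot (xt ⟨0, hn⟩) v| := by
            rw [abs_mul]
            rcases hy ⟨0, hn⟩ with h | h <;> rw [h] <;> norm_num
        _ ≤ norm2 (xt ⟨0, hn⟩) * norm2 v := abs_dot_le _ _
        _ ≤ norm2 (xt ⟨0, hn⟩) * 1 :=
            mul_le_mul_of_nonneg_left hv (norm2_nonneg _)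
        _ = norm2 (xt ⟨0, hn⟩) := mul_one _
    · refine ⟨fun j => s⁻¹ * w j, ?_, ?_⟩
      · rw [norm2_smul s⁻¹ (by positivity) w, ← hs, inv_mul_cancel₀ hspos.ne']
      · have hdv : ∀ i, y i * dot (xt i) (fun j => s⁻¹ * w j) = s⁻¹ := by
          intro i
          have : dot (xt i) (fun j => s⁻¹ * w j) = s⁻¹ * y i := by
            simp only [dot]
            rw [← hyw i]
            simp only [dot, Finset.mul_sum]
            exact Finset.sum_congr rfl fun j _ => by ring
          rw [this, ← mul_assoc, mul_comm (y i) s⁻¹, mul_assoc, ← sq, hy2 i, mul_one]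
        simp only [hdv]
        exact (ciInf_const).symm
  -- final arithmetic
  have hmid : a⁻¹ * s / Real.sqrt n ≤ s⁻¹ := by
    rw [div_le_iff₀ hsqn, inv_mul_eq_div, div_le_iff₀ hapos]
    calc s ≤ s⁻¹ * (a * Real.sqrt n) := by
          have := mul_le_mul_of_nonneg_left hcs (le_of_lt (inv_pos.mpr hspos))
          calc s = s⁻¹ * s ^ 2 := by field_simp
            _ ≤ s⁻¹ * (a * Real.sqrt n) := this
      _ = s⁻¹ * Real.sqrt n * a := by ring
  calc sInf {c | ∃ u : Fin n → ℝ, norm2 u = 1 ∧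
        c = norm2 (fun j : Fin m => ∑ i, u i * xt i j)} / Real.sqrt n
      ≤ (a⁻¹ * s) / Real.sqrt n := by gcongr
    _ ≤ s⁻¹ := hmid
    _ ≤ _ := hsup

end
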